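/- arXiv:2207.01115 — 4 statements merged into one kernel-verified Lean document; each statement's English description precedes it below -/
import Mathlib

section
/- Let ν be a probability measure on a measurable space S, let h : S → [0,∞] be measurable with h(x) < ∞ for ν-almost every x, and let α be a real number with 0 < α ≤ 1. Define the importance weight W : S → [0,∞] by W(x) = (α + (1−α)·h(x))⁻¹. Then for every measurable function F : S → [0,∞], ∫ F dν = α · ∫ W·F dν + (1−α) · ∫ W·F d(ν.withDensity h). That is, the expectation of F under the true transition law equals the α-weighted combination of the W-reweighted expectations under the true law and under the biased law. -/
open MeasureTheory
open scoped ENNReal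

/-- **Theorem 2 (USHER), expectation identity.**
With `ν` the true transition law, `ν.withDensity h` the HER-biased law, and importance
weight `W x = (α + (1-α)·h x)⁻¹`, the expectation of any nonnegative measurable `F`
under the true law equals the `α`-weighted combination of the `W`-reweighted
expectations under the true and biased laws. -/
theorem usher_expectation_identity
    {S : Type*} [MeasurableSpace S] (ν : Measure S) [IsProbabilityMeasure ν]
    (h : S → ℝ≥0∞) (hmeas : Measurable h) (hfin : ∀ᵐ x ∂ν, h x < ⊤)
    (α : ℝ) (hα0 : 0 < α) (hα1 : α ≤ 1)
    (W : S → ℝ≥0∞) (hW : ∀ x, W x = (ENNReal.ofReal α + ENNReal.ofReal (1 - α) * h x)⁻¹) :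
    ∀ F : S → ℝ≥0∞, Measurable F →
      ∫⁻ x, F x ∂ν
        = ENNReal.ofReal α * ∫⁻ x, W x * F x ∂ν
          + ENNReal.ofReal (1 - α) * ∫⁻ x, W x * F x ∂(ν.withDensity h) := by
  intro F hF
  have hWmeas : Measurable W := by
    have : Measurable fun x => (ENNReal.ofReal α + ENNReal.ofReal (1 - α) * h x)⁻¹ :=
      ((measurable_const.add (measurable_const.mul hmeas))).inv
    simpa [funext hW] using this
  rw [show (∫⁻ x, W x * F x ∂(ν.withDensity h)) = ∫⁻ a, (W * F) a ∂(ν.withDensity h) from rfl,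
    lintegral_withDensity_eq_lintegral_mul ν hmeas (hWmeas.mul hF)]
  simp only [Pi.mul_apply]
  rw [← lintegral_const_mul (f := fun x => W x * F x) _ (hWmeas.mul hF),
      ← lintegral_const_mul (f := fun x => h x * (W x * F x)) _ (hmeas.mul (hWmeas.mul hF)),
      ← lintegral_add_left]
  · refine lintegral_congr_ae ?_
    filter_upwards [hfin] with x hx
    have hne : (ENNReal.ofReal α + ENNReal.ofReal (1 - α) * h x) ≠ 0 := by
      have : ENNReal.ofReal α ≠ 0 := by simp [ENNReal.ofReal_eq_zero, not_le, hα0]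
      simp [this]
    have hnt : (ENNReal.ofReal α + ENNReal.ofReal (1 - α) * h x) ≠ ⊤ := by
      refine ENNReal.add_ne_top.2 ⟨ENNReal.ofReal_ne_top, ?_⟩
      exact ENNReal.mul_ne_top ENNReal.ofReal_ne_top hx.ne
    calc F x = 1 * F x := (one_mul _).symm
      _ = ((ENNReal.ofReal α + ENNReal.ofReal (1 - α) * h x) * W x) * F x := by
            rw [hW, ENNReal.mul_inv_cancel hne hnt]
      _ = ENNReal.ofReal α * (W x * F x) + ENNReal.ofReal (1 - α) * (h x * (W x * F x)) := by
            ring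
  · exact measurable_const.mul (hWmeas.mul hF)
end

section
/- Under the stated setup, fix g ∈ G with 0 < m(g) < ∞, let ν = μ.withDensity d be the true transition law, let ν_g = μ.withDensity (fun s' => (k(s',g)/m(g))·d(s')) be the HER-biased transition law given hindsight goal g, and let α be a real number with 0 < α ≤ 1. Define the importance weight W(s') = m(g) / (α·m(g) + (1−α)·k(s',g)). Then for every measurable function F : S → [0,∞], ∫ F dν = α · ∫ W·F dν + (1−α) · ∫ W·F dν_g. -/
open MeasureTheory
open scoped ENNReal

/-- **Theorem 2 of the paper in its original variables.**
`ν = μ.withDensity d` is the true transition law, `ν_g` the HER-biased law given a fixed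
hindsight goal `g` with `0 < m g < ∞`, and
`W s' = m g / (α·m g + (1-α)·k s' g)` is USHER's importance weight. Then for any
nonnegative measurable `F`, `∫ F dν = α·∫ W·F dν + (1-α)·∫ W·F dν_g`. -/
theorem usher_expectation_identity_original_variables
    {S G : Type*} [MeasurableSpace S] [MeasurableSpace G]
    (μ : Measure S) (ρ : Measure G) [SigmaFinite μ] [SigmaFinite ρ]
    (d : S → ℝ≥0∞) (hd : Measurable d) (hd1 : ∫⁻ s', d s' ∂μ = 1)
    (k : S → G → ℝ≥0∞) (hk : Measurable (fun p : S × G => k p.1 p.2))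
    (hk1 : ∀ s', ∫⁻ g, k s' g ∂ρ = 1)
    (m : G → ℝ≥0∞) (hm : ∀ g, m g = ∫⁻ s', k s' g * d s' ∂μ)
    (g : G) (hg0 : 0 < m g) (hgfin : m g < ⊤)
    (ν : Measure S) (hν : ν = μ.withDensity d)
    (ν_g : Measure S) (hνg : ν_g = μ.withDensity (fun s' => (k s' g / m g) * d s'))
    (α : ℝ) (hα0 : 0 < α) (hα1 : α ≤ 1)
    (W : S → ℝ≥0∞)
    (hW : ∀ s', W s' = m g / (ENNReal.ofReal α * m g + ENNReal.ofReal (1 - α) * k s' g)) :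
    ∀ F : S → ℝ≥0∞, Measurable F →
      ∫⁻ s', F s' ∂ν
        = ENNReal.ofReal α * ∫⁻ s', W s' * F s' ∂ν
          + ENNReal.ofReal (1 - α) * ∫⁻ s', W s' * F s' ∂ν_g := by
  intro F hF
  subst hν hνg
  set a := ENNReal.ofReal α with ha
  set b := ENNReal.ofReal (1 - α) with hb
  have ha0 : a ≠ 0 := by simp [ha, hα0]
  have haT : a ≠ ∞ := ENNReal.ofReal_ne_top
  have hbT : b ≠ ∞ := ENNReal.ofReal_ne_top
  have hm0 : m g ≠ 0 := hg0.ne'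
  have hmT : m g ≠ ∞ := hgfin.ne
  have hkg : Measurable (fun s' => k s' g) := hk.comp (measurable_id.prodMk measurable_const)
  have hWeq : W = fun s' => m g / (a * m g + b * k s' g) := funext hW
  have hWm : Measurable W := by
    rw [hWeq]
    exact measurable_const.div (measurable_const.add (hkg.const_mul b))
  have hdens : Measurable (fun s' => (k s' g / m g) * d s') :=
    (hkg.div measurable_const).mul hd
  rw [lintegral_withDensity_eq_lintegral_mul μ hd hF,
    lintegral_withDensity_eq_lintegral_mul μ hd (show Measurable (fun s' => W s' * F s') from hWm.mul hF),
    lintegral_withDensity_eq_lintegral_mul μ hdens (show Measurable (fun s' => W s' * F s') from hWm.mul hF)]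
  simp only [Pi.mul_apply]
  rw [← lintegral_const_mul a (show Measurable (fun s' => d s' * (W s' * F s')) from hd.mul (hWm.mul hF)),
    ← lintegral_const_mul b (show Measurable (fun s' => k s' g / m g * d s' * (W s' * F s')) from hdens.mul (hWm.mul hF)),
    ← lintegral_add_left (show Measurable (fun s' => a * (d s' * (W s' * F s'))) from (hd.mul (hWm.mul hF)).const_mul a)]
  refine lintegral_congr_ae ?_
  have hae : ∀ᵐ s' ∂μ, k s' g * d s' ≠ ∞ := by
    refine ae_lt_top (show Measurable (fun s' => k s' g * d s') from hkg.mul hd) ?_ |>.mono fun s' h => h.ne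
    rw [← hm]; exact hmT
  filter_upwards [hae] with s' hkd
  by_cases hds : d s' = 0
  · simp [hds]
  · have hKT : k s' g ≠ ∞ := by
      intro h
      exact hkd (by simp [h, hds])
    rw [hW]
    set K := k s' g
    set M := m g
    set D := a * M + b * K with hD
    have hD0 : D ≠ 0 := by
      rw [hD]
      intro h
      rcases mul_eq_zero.mp (add_eq_zero.mp h).1 with h' | h'
      exacts [ha0 h', hm0 h']
    have hDT : D ≠ ∞ := ENNReal.add_ne_top.mpr
      ⟨ENNReal.mul_ne_top haT hmT, ENNReal.mul_ne_top hbT hKT⟩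
    have h1 : K / M * (M / D) = K / D := by
      rw [div_eq_mul_inv, div_eq_mul_inv, div_eq_mul_inv]
      calc K * M⁻¹ * (M * D⁻¹) = K * (M⁻¹ * M) * D⁻¹ := by ring
        _ = K * D⁻¹ := by rw [ENNReal.inv_mul_cancel hm0 hmT, mul_one]
    have key : a * (M / D) + b * (K / M * (M / D)) = 1 := by
      rw [h1, ← mul_div_assoc, ← mul_div_assoc, ENNReal.div_add_div_same, ← hD,
        ENNReal.div_self hD0 hDT]
    symm
    calc a * (d s' * (M / D * F s')) + b * (K / M * d s' * (M / D * F s'))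
        = (a * (M / D) + b * (K / M * (M / D))) * (d s' * F s') := by ring
      _ = d s' * F s' := by rw [key, one_mul]
end

section
/- Under the stated setup, fix g ∈ G with 0 < m(g) < ∞, let ν = μ.withDensity d, ν_g = μ.withDensity (fun s' => (k(s',g)/m(g))·d(s')), α real with 0 < α ≤ 1, and W(s') = m(g) / (α·m(g) + (1−α)·k(s',g)). Let R : S → [0,∞] and V : S → [0,∞] be measurable (the sparse reward s' ↦ R(s', g_r) and the next-state value s' ↦ Q(s', π(s', g_p), g_r, g_p), respectively) and let γ ∈ [0,∞) be the discount factor. If Q₀ = ∫ (R(s') + γ·V(s')) dν(s') (the Bellman target under the true transition law), then Q₀ = α · ∫ W(s')·(R(s') + γ·V(s')) dν(s') + (1−α) · ∫ W(s')·(R(s') + γ·V(s')) dν_g(s'). That is, the W-reweighted mixture of HER samples and uniformly sampled goals yields an unbiased estimate of the Bellman target. -/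
open MeasureTheory
open scoped ENNReal

/-- **Corollary 2 of the paper: the unbiased Bellman target used by USHER.**
With `ν = μ.withDensity d` the true transition law, `ν_g` the HER-biased law for a fixed
hindsight goal `g` with `0 < m g < ∞`, importance weight
`W s' = m g / (α·m g + (1-α)·k s' g)`, sparse reward `R`, next-state value `V`, and
discount factor `γ`, the Bellman target `Q₀ = ∫ (R + γ·V) dν` equals the `W`-reweighted
mixture of the expectation under the true law and under the biased (hindsight) law. -/
theorem usher_unbiased_bellman_target
    {S G : Type*} [MeasurableSpace S] [MeasurableSpace G]
    (μ : Measure S) (ρ : Measure G) [SigmaFinite μ] [SigmaFinite ρ]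
    (d : S → ℝ≥0∞) (hd : Measurable d) (hd1 : ∫⁻ s', d s' ∂μ = 1)
    (k : S → G → ℝ≥0∞) (hk : Measurable (fun p : S × G => k p.1 p.2))
    (hk1 : ∀ s', ∫⁻ g, k s' g ∂ρ = 1)
    (m : G → ℝ≥0∞) (hm : ∀ g, m g = ∫⁻ s', k s' g * d s' ∂μ)
    (g : G) (hg0 : 0 < m g) (hgfin : m g < ⊤)
    (ν : Measure S) (hν : ν = μ.withDensity d)
    (ν_g : Measure S) (hνg : ν_g = μ.withDensity (fun s' => (k s' g / m g) * d s'))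
    (α : ℝ) (hα0 : 0 < α) (hα1 : α ≤ 1)
    (W : S → ℝ≥0∞)
    (hW : ∀ s', W s' = m g / (ENNReal.ofReal α * m g + ENNReal.ofReal (1 - α) * k s' g))
    (R : S → ℝ≥0∞) (hR : Measurable R)
    (V : S → ℝ≥0∞) (hV : Measurable V)
    (γ : ℝ) (hγ : 0 ≤ γ)
    (Q₀ : ℝ≥0∞) (hQ₀ : Q₀ = ∫⁻ s', (R s' + ENNReal.ofReal γ * V s') ∂ν) :
    Q₀ = ENNReal.ofReal α * ∫⁻ s', W s' * (R s' + ENNReal.ofReal γ * V s') ∂ν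
        + ENNReal.ofReal (1 - α) * ∫⁻ s', W s' * (R s' + ENNReal.ofReal γ * V s') ∂ν_g := by

  set a := ENNReal.ofReal α with ha
  set b := ENNReal.ofReal (1 - α) with hb
  have hkg : Measurable (fun s' => k s' g) := hk.comp (measurable_id.prodMk measurable_const)
  have hF : Measurable (fun s' => R s' + ENNReal.ofReal γ * V s') :=
    hR.add (measurable_const.mul hV)
  have hWm : Measurable W := by
    have : W = fun s' => m g / (a * m g + b * k s' g) := funext hW
    rw [this]
    exact measurable_const.div (measurable_const.add (measurable_const.mul hkg))
  have hWF : Measurable (fun s' => W s' * (R s' + ENNReal.ofReal γ * V s')) := hWm.mul hF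
  have hdg : Measurable (fun s' => (k s' g / m g) * d s') :=
    (hkg.div measurable_const).mul hd
  -- a.e. finiteness of k · (on the support of d)
  have hae : ∀ᵐ s' ∂μ, k s' g * d s' ≠ ⊤ := by
    refine ae_lt_top (hkg.mul hd) ?_ |>.mono fun s' h => h.ne
    show ∫⁻ s', k s' g * d s' ∂μ ≠ ⊤
    rw [← hm g]; exact hgfin.ne
  rw [hQ₀, hν, hνg,
    lintegral_withDensity_eq_lintegral_mul μ hd hF,
    lintegral_withDensity_eq_lintegral_mul μ hd hWF,
    lintegral_withDensity_eq_lintegral_mul μ hdg hWF]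
  simp only [Pi.mul_apply]
  rw [← lintegral_const_mul a (f := fun s' => d s' * (W s' * (R s' + ENNReal.ofReal γ * V s'))) (hd.mul hWF),
    ← lintegral_const_mul b (f := fun s' => k s' g / m g * d s' * (W s' * (R s' + ENNReal.ofReal γ * V s'))) (hdg.mul hWF),
    ← lintegral_add_left (f := fun s' => a * (d s' * (W s' * (R s' + ENNReal.ofReal γ * V s')))) (measurable_const.mul (hd.mul hWF))]
  refine lintegral_congr_ae (hae.mono fun s' hs' => ?_)
  simp only [Pi.mul_apply]
  rcases eq_or_ne (d s') 0 with hd0 | hd0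
  · simp [hd0]
  by_cases hkfin : k s' g = ⊤
  · exact absurd (by simp [hkfin, hd0]) hs'
  -- main pointwise computation
  have ha0 : a ≠ 0 := by simpa [ha] using hα0
  have hafin : a ≠ ⊤ := ENNReal.ofReal_ne_top
  have hbfin : b ≠ ⊤ := ENNReal.ofReal_ne_top
  have hD0 : a * m g + b * k s' g ≠ 0 := by
    simp [ha0, hg0.ne', hkfin]
  have hDfin : a * m g + b * k s' g ≠ ⊤ := by
    simp [ENNReal.add_ne_top, ENNReal.mul_ne_top, hafin, hbfin, hgfin.ne, hkfin]
  have hkey : a * W s' + b * (k s' g / m g) * W s' = 1 := by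
    rw [hW s']
    have h2 : k s' g / m g * m g = k s' g := ENNReal.div_mul_cancel hg0.ne' hgfin.ne
    calc a * (m g / (a * m g + b * k s' g)) + b * (k s' g / m g) * (m g / (a * m g + b * k s' g))
        = a * m g / (a * m g + b * k s' g)
          + b * (k s' g / m g) * m g / (a * m g + b * k s' g) := by
          rw [← mul_div_assoc, ← mul_div_assoc]
      _ = a * m g / (a * m g + b * k s' g) + b * k s' g / (a * m g + b * k s' g) := by
          rw [mul_assoc, h2]
      _ = (a * m g + b * k s' g) / (a * m g + b * k s' g) := ENNReal.div_add_div_same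
      _ = 1 := ENNReal.div_self hD0 hDfin
  symm
  calc a * (d s' * (W s' * (R s' + ENNReal.ofReal γ * V s')))
        + b * (k s' g / m g * d s' * (W s' * (R s' + ENNReal.ofReal γ * V s')))
      = (a * W s' + b * (k s' g / m g) * W s') * (d s' * (R s' + ENNReal.ofReal γ * V s')) := by
        ring
    _ = d s' * (R s' + ENNReal.ofReal γ * V s') := by rw [hkey, one_mul]
end

section
/- Let κ be a Markov kernel from a measurable space S to itself and let φ : S → G be a measurable map to a measurable space G. For each integer t ≥ 1 let κ^t denote the t-fold composition of κ with itself (κ^1 = κ), and for each integer T ≥ 1 define μ_T : S → Measure G by μ_T(s) = T⁻¹ • ∑_{t=1}^{T} (κ^t s).map φ, the distribution of the achieved goal φ(X_t) at a time t chosen uniformly from {1, …, T} along the Markov chain started from s. Then for every integer T ≥ 2 and every s ∈ S, μ_T(s) = (κ s).bind (fun s' => T⁻¹ • δ_{φ(s')} + ((T−1)/T) • μ_{T−1}(s')). -/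
open MeasureTheory ProbabilityTheory
open scoped ENNReal

/-- `iterKernel κ t` is the `(t+1)`-fold composition of `κ` with itself, so that
`iterKernel κ 0 = κ` is the one-step kernel. -/
noncomputable def iterKernel {S : Type*} [MeasurableSpace S] (κ : Kernel S S) :
    ℕ → Kernel S S
  | 0 => κ
  | (n + 1) => κ ∘ₖ iterKernel κ n

/-- `hindsightGoalDist κ φ T s` is the distribution of the achieved goal `φ(X_t)` at a
time `t` chosen uniformly from `{1, …, T}` along the Markov chain with kernel `κ`
started from `s` (the successor representation over future achieved goals). -/
noncomputable def hindsightGoalDist {S G : Type*} [MeasurableSpace S] [MeasurableSpace G]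
    (κ : Kernel S S) (φ : S → G) (T : ℕ) (s : S) : Measure G :=
  (T : ℝ≥0∞)⁻¹ • ∑ t ∈ Finset.range T, ((iterKernel κ t) s).map φ

lemma iterKernel_succ_right {S : Type*} [MeasurableSpace S] (κ : Kernel S S)
    [IsMarkovKernel κ] (n : ℕ) :
    iterKernel κ (n + 1) = iterKernel κ n ∘ₖ κ := by
  induction n with
  | zero => rfl
  | succ n ih =>
    show κ ∘ₖ iterKernel κ (n + 1) = (κ ∘ₖ iterKernel κ n) ∘ₖ κ
    rw [ih, Kernel.comp_assoc]

/-- **The successor-representation recursion for HER's future goal distribution**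
(the Bellman-type equation USHER uses to train the future-goal-density network):
`f(g | s, T) = E_{s'}[ (1/T)·δ_{φ(s')} + (1 − 1/T)·f(g | s', T−1) ]`. -/
theorem hindsightGoalDist_recursion
    {S G : Type*} [MeasurableSpace S] [MeasurableSpace G]
    (κ : Kernel S S) [IsMarkovKernel κ] (φ : S → G) (hφ : Measurable φ) :
    ∀ T : ℕ, 2 ≤ T → ∀ s : S,
      hindsightGoalDist κ φ T s
        = (κ s).bind (fun s' =>
            (T : ℝ≥0∞)⁻¹ • Measure.dirac (φ s')
              + (((T : ℝ≥0∞) - 1) / T) • hindsightGoalDist κ φ (T - 1) s') := by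
  intro T hT s
  obtain ⟨n, rfl⟩ : ∃ n, T = n + 1 := ⟨T - 1, by omega⟩
  have hn1 : 1 ≤ n := by omega
  have hn0 : (n : ℝ≥0∞) ≠ 0 := Nat.cast_ne_zero.mpr (by omega)
  have hntop : (n : ℝ≥0∞) ≠ ⊤ := ENNReal.natCast_ne_top n
  have hsub : ((n : ℝ≥0∞) + 1) - 1 = n := ENNReal.add_sub_cancel_right ENNReal.one_ne_top
  have hTsub : (n + 1) - 1 = n := by omega
  -- measurability of the iterated-kernel evaluations
  have hF : ∀ (t : ℕ) {A : Set G}, MeasurableSet A →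
      Measurable fun s' : S => (iterKernel κ t) s' (φ ⁻¹' A) := by
    intro t A hA
    exact Kernel.measurable_coe _ (hφ hA)
  -- measurability of the measure-valued integrand
  have hcm : Measurable (fun s' : S =>
      ((n : ℝ≥0∞) + 1)⁻¹ • Measure.dirac (φ s')
        + ((((n : ℝ≥0∞) + 1) - 1) / ((n : ℝ≥0∞) + 1)) • hindsightGoalDist κ φ n s') := by
    apply Measure.measurable_of_measurable_coe
    intro A hA
    simp only [Measure.add_apply, Measure.smul_apply, smul_eq_mul, hindsightGoalDist,
      Measure.coe_finset_sum, Finset.sum_apply, Measure.map_apply hφ hA,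
      Measure.dirac_apply' _ hA]
    apply Measurable.add
    · exact ((measurable_one.indicator hA).comp hφ).const_mul _
    · exact ((Finset.measurable_sum _ fun t _ => hF t hA).const_mul _).const_mul _
  ext A hA
  push_cast
  rw [Measure.bind_apply hA hcm.aemeasurable]
  -- rewrite the integrand
  have hinteg : ∀ s' : S,
      (((n : ℝ≥0∞) + 1)⁻¹ • Measure.dirac (φ s')
        + ((((n : ℝ≥0∞) + 1) - 1) / ((n : ℝ≥0∞) + 1)) • hindsightGoalDist κ φ n s') A
      = ((n : ℝ≥0∞) + 1)⁻¹ *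
          (Set.indicator A 1 (φ s') + ∑ t ∈ Finset.range n, (iterKernel κ t) s' (φ ⁻¹' A)) := by
    intro s'
    have hcoef : ((((n : ℝ≥0∞) + 1) - 1) / ((n : ℝ≥0∞) + 1)) * (n : ℝ≥0∞)⁻¹
        = ((n : ℝ≥0∞) + 1)⁻¹ := by
      rw [hsub, div_eq_mul_inv, mul_comm (n : ℝ≥0∞), mul_assoc,
        ENNReal.mul_inv_cancel hn0 hntop, mul_one]
    simp only [Measure.add_apply, Measure.smul_apply, smul_eq_mul, hindsightGoalDist,
      Measure.coe_finset_sum, Finset.sum_apply, Measure.map_apply hφ hA,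
      Measure.dirac_apply' _ hA, mul_add]
    rw [← mul_assoc, hcoef]
  simp only [hinteg]
  rw [lintegral_const_mul _ (by
    exact ((measurable_one.indicator hA).comp hφ).add
      (Finset.measurable_sum _ fun t _ => hF t hA))]
  rw [lintegral_add_right _ (Finset.measurable_sum _ fun t _ => hF t hA),
    lintegral_finset_sum _ fun t _ => hF t hA]
  -- now compute the left-hand side
  simp only [hindsightGoalDist, Measure.smul_apply, smul_eq_mul, Measure.coe_finset_sum,
    Finset.sum_apply, Measure.map_apply hφ hA]
  rw [Nat.cast_add, Nat.cast_one]
  congr 1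
  rw [Finset.sum_range_succ']
  have h1 : ∀ t ∈ Finset.range n, (iterKernel κ (t + 1)) s (φ ⁻¹' A)
      = ∫⁻ s', (iterKernel κ t) s' (φ ⁻¹' A) ∂ κ s := fun t _ => by
    rw [iterKernel_succ_right, Kernel.comp_apply' _ _ _ (hφ hA)]
  have h0 : (iterKernel κ 0) s (φ ⁻¹' A) = ∫⁻ s', Set.indicator A 1 (φ s') ∂ κ s := by
    show (κ s) (φ ⁻¹' A) = _
    rw [← lintegral_indicator_one (hφ hA)]
    exact lintegral_congr fun s' => rfl
  rw [Finset.sum_congr rfl h1, h0]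
  ring
end
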